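/- Let H be a subgroup of a discrete group G and θ ∈ ℂ[H]. If there exists a nonzero f ∈ ℓ²(G) with θ * f = 0, then there exists a nonzero k ∈ ℓ²(H) with θ * k = 0. -/

import Mathlib

variable {G : Type*} [Group G]

/-- Left convolution action of the group ring `ℂ[H]` of a subgroup `H ≤ G` on
complex-valued functions on `G`. -/
noncomputable def subConvG {H : Subgroup G} (θ : MonoidAlgebra ℂ H) (f : G → ℂ) :
    G → ℂ :=
  fun x => ∑ h ∈ θ.coeff.support, θ.coeff h * f ((h : G)⁻¹ * x)

/-- Left convolution action of `ℂ[H]` on complex-valued functions on `H`. -/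
noncomputable def subConvH {H : Subgroup G} (θ : MonoidAlgebra ℂ H) (k : H → ℂ) :
    H → ℂ :=
  fun x => ∑ h ∈ θ.coeff.support, θ.coeff h * k (h⁻¹ * x)

/-- Let `H` be a subgroup of a discrete group `G` and `θ ∈ ℂ[H]`.
If `θ * f = 0` for some nonzero `f ∈ ℓ²(G)`, then `θ * k = 0` for some nonzero
`k ∈ ℓ²(H)`. -/
theorem conv_kernel_descends_to_subgroup (H : Subgroup G) (θ : MonoidAlgebra ℂ H)
    (f : lp (fun _ : G => ℂ) 2) (hf : f ≠ 0) (hθf : subConvG θ (⇑f) = 0) :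
    ∃ k : lp (fun _ : H => ℂ) 2, k ≠ 0 ∧ subConvH θ (⇑k) = 0 := by
  -- pick a point where f is nonzero
  have hfne : (⇑f : G → ℂ) ≠ 0 := by
    intro h
    exact hf (by ext x; simp [h])
  obtain ⟨x₀, hx₀⟩ := Function.ne_iff.mp hfne
  -- the restricted function
  set g : H → ℂ := fun h => f ((h : G) * x₀) with hg
  have hinj : Function.Injective (fun h : H => (h : G) * x₀) := by
    intro a b hab
    simp only [mul_left_inj] at hab
    exact Subtype.coe_injective hab
  have hsum : Summable fun x : G => ‖f x‖ ^ (2 : ENNReal).toReal :=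
    (memℓp_gen_iff (by norm_num)).mp (lp.memℓp f)
  have hmem : Memℓp g 2 := memℓp_gen (hsum.comp_injective hinj)
  refine ⟨⟨g, hmem⟩, ?_, ?_⟩
  · intro h
    apply hx₀
    have hg0 : g = 0 := by
      have := Subtype.ext_iff.mp h
      exact this
    simpa [hg] using congrFun hg0 1
  · funext x
    have h0 := congrFun hθf ((x : G) * x₀)
    simp only [subConvG, Pi.zero_apply] at h0
    simp only [subConvH, Pi.zero_apply]
    rw [← h0]
    apply Finset.sum_congr rfl
    intro h _
    simp [hg, mul_assoc]
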